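/- There exists a positive real number z having no 'lower separation function': there is no computable partial function f : ℚ → ℚ such that for every rational a with 0 < a < z, f(a) is defined and a < f(a) < z. -/
import Mathlib

open Set

/-- The set of reals "served" by a partial function `f`. -/
def sepSet (f : ℚ →. ℚ) : Set ℝ :=
  {z | 0 < z ∧ ∀ a : ℚ, 0 < (a : ℝ) → (a : ℝ) < z →
    ∃ b ∈ f a, (a : ℝ) < (b : ℝ) ∧ (b : ℝ) < z}

lemma sepSet_nowhereDense (f : ℚ →. ℚ) : IsNowhereDense (sepSet f) := by
  rw [IsNowhereDense, Set.eq_empty_iff_forall_notMem]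
  intro x hx
  rw [mem_interior_iff_mem_nhds, Metric.mem_nhds_iff] at hx
  obtain ⟨ε, hε, hball⟩ := hx
  rw [Real.ball_eq_Ioo] at hball
  -- x ∈ closure (sepSet f), pick z₀ ∈ sepSet f ∩ Ioo (x-ε) (x+ε)
  have hxI : x ∈ Ioo (x - ε) (x + ε) := ⟨by linarith, by linarith⟩
  have hxc : x ∈ closure (sepSet f) := hball hxI
  obtain ⟨z₀, hz₀I, hz₀⟩ := (mem_closure_iff.1 hxc) _ isOpen_Ioo hxI
  obtain ⟨hz₀pos, hz₀prop⟩ := hz₀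
  -- pick rational a with max (x-ε) 0 < a < z₀
  obtain ⟨a, ha1, ha2⟩ := exists_rat_btwn (max_lt hz₀I.1 hz₀pos)
  have ha0 : 0 < (a : ℝ) := lt_of_le_of_lt (le_max_right (x - ε) 0) ha1
  have haxe : x - ε < (a : ℝ) := lt_of_le_of_lt (le_max_left (x - ε) 0) ha1
  obtain ⟨b, hbf, hab, hbz₀⟩ := hz₀prop a ha0 ha2
  -- now pick z₁ ∈ sepSet f with a < z₁ < min b (x+ε)
  have habe : (a : ℝ) < min (b : ℝ) (x + ε) := lt_min hab (lt_trans ha2 hz₀I.2)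
  set m : ℝ := ((a : ℝ) + min (b : ℝ) (x + ε)) / 2 with hm
  have hm1 : (a : ℝ) < m := by rw [hm]; linarith
  have hm2 : m < min (b : ℝ) (x + ε) := by rw [hm]; linarith
  have hmc : m ∈ closure (sepSet f) := by
    apply hball
    constructor
    · linarith
    · have := lt_of_lt_of_le hm2 (min_le_right _ _); linarith
  obtain ⟨z₁, hz₁I, hz₁⟩ := (mem_closure_iff.1 hmc) _ isOpen_Ioo
    (⟨hm1, hm2⟩ : m ∈ Ioo (a : ℝ) (min (b : ℝ) (x + ε)))
  obtain ⟨b', hb'f, hab', hb'z₁⟩ := hz₁.2 a ha0 hz₁I.1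
  have : b' = b := Part.mem_unique hb'f hbf
  subst this
  exact absurd (lt_trans hb'z₁ (lt_of_lt_of_le hz₁I.2 (min_le_left _ _))) (lt_irrefl _)

/-- Decoding interpretation of a code as a partial function `ℚ →. ℚ`. -/
noncomputable def codeFun (c : Nat.Partrec.Code) : ℚ →. ℚ :=
  fun a => (c.eval (@Encodable.encode ℚ Primcodable.toEncodable a)).bind fun n =>
    Part.ofOption (@Encodable.decode ℚ Primcodable.toEncodable n)

lemma partrec_countable : {f : ℚ →. ℚ | Partrec f}.Countable := by
  apply Set.Countable.mono _ (Set.countable_range codeFun)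
  intro f hf
  obtain ⟨c, hc⟩ := Nat.Partrec.Code.exists_code.1 hf
  refine ⟨c, funext fun a => Part.ext fun q => ?_⟩
  have h := congrFun hc (@Encodable.encode ℚ Primcodable.toEncodable a)
  simp only [Encodable.encodek, Part.coe_some, Part.bind_some] at h
  simp only [codeFun, h, Part.mem_bind_iff, Part.mem_map_iff, Part.mem_ofOption,
    Option.mem_def]
  constructor
  · rintro ⟨n, ⟨b, hb, rfl⟩, hq⟩
    rw [@Encodable.encodek ℚ Primcodable.toEncodable, Option.some_inj] at hq
    subst hq; exact hb
  · intro hq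
    exact ⟨_, ⟨q, hq, rfl⟩, by rw [@Encodable.encodek ℚ Primcodable.toEncodable]⟩

theorem exists_real_without_lower_separation_function :
    ∃ z : ℝ, 0 < z ∧
      ¬ ∃ f : ℚ →. ℚ, Partrec f ∧
        ∀ a : ℚ, 0 < (a : ℝ) → (a : ℝ) < z →
          ∃ b ∈ f a, (a : ℝ) < (b : ℝ) ∧ (b : ℝ) < z := by
  have hmeagre : IsMeagre (⋃₀ (sepSet '' {f : ℚ →. ℚ | Partrec f})) := by
    rw [isMeagre_iff_countable_union_isNowhereDense]
    refine ⟨sepSet '' {f : ℚ →. ℚ | Partrec f}, ?_, partrec_countable.image _, subset_rfl⟩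
    rintro t ⟨f, -, rfl⟩
    exact sepSet_nowhereDense f
  have hdense : Dense (⋃₀ (sepSet '' {f : ℚ →. ℚ | Partrec f}))ᶜ :=
    dense_of_mem_residual hmeagre
  obtain ⟨z, hz⟩ := hdense.exists_mem_open isOpen_Ioi (Set.nonempty_Ioi (a := (1:ℝ)))
  refine ⟨z, lt_trans one_pos hz.2, ?_⟩
  rintro ⟨f, hf, hprop⟩
  exact hz.1 ⟨sepSet f, ⟨f, hf, rfl⟩, lt_trans one_pos hz.2, hprop⟩
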